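/- The function h : [0,1] → ℝ defined by h(y) = 1 − (1 + max(y − 1 + ln 2, 0))·exp(−y − max(y − 1 + ln 2, 0)) is concave on the interval [0,1]. -/

import Mathlib

open Real Set

noncomputable def hFun (y : ℝ) : ℝ :=
  1 - (1 + max (y - 1 + Real.log 2) 0) * Real.exp (-y - max (y - 1 + Real.log 2) 0)

noncomputable def gFun (y : ℝ) : ℝ :=
  (1 + 2 * max (y - 1 + Real.log 2) 0) * Real.exp (-y - max (y - 1 + Real.log 2) 0)

lemma hasDerivAt_hFun (y : ℝ) : HasDerivAt hFun (gFun y) y := by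
  set y0 : ℝ := 1 - Real.log 2 with hy0
  -- left function and right function
  have hleft : ∀ z : ℝ, HasDerivAt (fun y : ℝ => 1 - Real.exp (-y)) (Real.exp (-z)) z := by
    intro z
    have : HasDerivAt (fun y : ℝ => Real.exp (-y)) (Real.exp (-z) * (-1)) z :=
      (Real.hasDerivAt_exp (-z)).comp z ((hasDerivAt_id z).neg)
    simpa using (this.const_sub 1)
  have hright : ∀ z : ℝ, HasDerivAt
      (fun y : ℝ => 1 - (1 + (y - 1 + Real.log 2)) * Real.exp (-y - (y - 1 + Real.log 2)))
      ((1 + 2 * (z - 1 + Real.log 2)) * Real.exp (-z - (z - 1 + Real.log 2))) z := by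
    intro z
    have h1 : HasDerivAt (fun y : ℝ => 1 + (y - 1 + Real.log 2)) 1 z := by
      simpa using (((hasDerivAt_id z).sub_const 1).add_const (Real.log 2)).const_add 1
    have h2 : HasDerivAt (fun y : ℝ => -y - (y - 1 + Real.log 2)) (-2) z := by
      have := ((hasDerivAt_id z).neg.sub (((hasDerivAt_id z).sub_const 1).add_const (Real.log 2)))
      exact this.congr_deriv (by norm_num)
    have h3 : HasDerivAt (fun y : ℝ => Real.exp (-y - (y - 1 + Real.log 2)))
        (Real.exp (-z - (z - 1 + Real.log 2)) * (-2)) z :=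
      (Real.hasDerivAt_exp _).comp z h2
    have h4 := (h1.mul h3).const_sub 1
    exact h4.congr_deriv (by ring)
  rcases lt_trichotomy y y0 with hy | hy | hy
  · -- y < y0 : max = 0 in a neighborhood
    have hev : (fun y : ℝ => 1 - Real.exp (-y)) =ᶠ[nhds y] hFun := by
      filter_upwards [Iio_mem_nhds hy] with z hz
      have : max (z - 1 + Real.log 2) 0 = 0 := by
        apply max_eq_right; simp only [mem_Iio, hy0] at hz ⊢; linarith
      simp [hFun, this]
    have : gFun y = Real.exp (-y) := by
      have : max (y - 1 + Real.log 2) 0 = 0 := by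
        apply max_eq_right; simp only [hy0] at hy; linarith
      simp [gFun, this]
    rw [this]
    exact (hleft y).congr_of_eventuallyEq hev.symm
  · -- y = y0 : glue within-derivatives
    have hmax0 : max (y - 1 + Real.log 2) 0 = 0 := by
      apply max_eq_right; rw [hy, hy0]; linarith
    have hgval : gFun y = Real.exp (-y) := by simp [gFun, hmax0]
    have hL : HasDerivWithinAt hFun (Real.exp (-y)) (Iic y) y := by
      refine ((hleft y).hasDerivWithinAt).congr ?_ ?_
      · intro z hz
        have : max (z - 1 + Real.log 2) 0 = 0 := by
          apply max_eq_right
          simp only [mem_Iic] at hz; rw [hy, hy0] at hz; linarith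
        simp [hFun, this]
      · simp [hFun, hmax0]
    have hR : HasDerivWithinAt hFun (Real.exp (-y)) (Ici y) y := by
      have hval : (1 + 2 * (y - 1 + Real.log 2)) * Real.exp (-y - (y - 1 + Real.log 2))
          = Real.exp (-y) := by
        have h1 : y - 1 + Real.log 2 = 0 := by rw [hy, hy0]; ring
        rw [h1]; ring_nf
      have hbase : HasDerivWithinAt
          (fun y : ℝ => 1 - (1 + (y - 1 + Real.log 2)) * Real.exp (-y - (y - 1 + Real.log 2)))
          (Real.exp (-y)) (Ici y) y := hval ▸ (hright y).hasDerivWithinAt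
      refine hbase.congr ?_ ?_
      · intro z hz
        have : max (z - 1 + Real.log 2) 0 = z - 1 + Real.log 2 := by
          apply max_eq_left
          simp only [mem_Ici] at hz; rw [hy, hy0] at hz; linarith
        simp [hFun, this]
      · simp [hFun, hmax0]
        have h1 : y - 1 + Real.log 2 = 0 := by rw [hy, hy0]; ring
        rw [h1]; ring_nf
    rw [hgval]
    have := hL.union hR
    rw [Iic_union_Ici] at this
    exact hasDerivWithinAt_univ.mp this
  · -- y > y0 : max = arg in a neighborhood
    have hmax : max (y - 1 + Real.log 2) 0 = y - 1 + Real.log 2 := by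
      apply max_eq_left; simp only [hy0] at hy; linarith
    have hev : (fun y : ℝ => 1 - (1 + (y - 1 + Real.log 2)) * Real.exp (-y - (y - 1 + Real.log 2)))
        =ᶠ[nhds y] hFun := by
      filter_upwards [Ioi_mem_nhds hy] with z hz
      have : max (z - 1 + Real.log 2) 0 = z - 1 + Real.log 2 := by
        apply max_eq_left; simp only [mem_Ioi, hy0] at hz; linarith
      simp [hFun, this]
    have hg : gFun y = (1 + 2 * (y - 1 + Real.log 2)) * Real.exp (-y - (y - 1 + Real.log 2)) := by
      simp [gFun, hmax]
    rw [hg]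
    exact (hright y).congr_of_eventuallyEq hev.symm

lemma antitone_gFun : Antitone gFun := by
  set y0 : ℝ := 1 - Real.log 2 with hy0
  -- antitone on each side
  have hIic : AntitoneOn gFun (Iic y0) := by
    intro a ha b hb hab
    have hma : max (a - 1 + Real.log 2) 0 = 0 := by
      apply max_eq_right; simp only [mem_Iic, hy0] at ha; linarith
    have hmb : max (b - 1 + Real.log 2) 0 = 0 := by
      apply max_eq_right; simp only [mem_Iic, hy0] at hb; linarith
    have ea : gFun a = Real.exp (-a) := by simp [gFun, hma]
    have eb : gFun b = Real.exp (-b) := by simp [gFun, hmb]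
    rw [ea, eb]
    exact Real.exp_le_exp.2 (by linarith)
  have hIci : AntitoneOn gFun (Ici y0) := by
    have hpsi : AntitoneOn
        (fun y : ℝ => (1 + 2 * (y - 1 + Real.log 2)) * Real.exp (-y - (y - 1 + Real.log 2)))
        (Ici y0) := by
      apply antitoneOn_of_deriv_nonpos (convex_Ici y0)
      · fun_prop
      · apply Differentiable.differentiableOn; fun_prop
      · intro x hx
        rw [interior_Ici] at hx
        have hd : HasDerivAt
            (fun y : ℝ => (1 + 2 * (y - 1 + Real.log 2)) * Real.exp (-y - (y - 1 + Real.log 2)))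
            (2 * Real.exp (-x - (x - 1 + Real.log 2)) +
              (1 + 2 * (x - 1 + Real.log 2)) * (Real.exp (-x - (x - 1 + Real.log 2)) * (-2))) x := by
          have h1 : HasDerivAt (fun y : ℝ => 1 + 2 * (y - 1 + Real.log 2)) 2 x := by
            simpa using ((((hasDerivAt_id x).sub_const 1).add_const (Real.log 2)).const_mul
              (2:ℝ)).const_add 1
          have h2 : HasDerivAt (fun y : ℝ => -y - (y - 1 + Real.log 2)) (-2) x := by
            have := ((hasDerivAt_id x).neg.sub
              (((hasDerivAt_id x).sub_const 1).add_const (Real.log 2)))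
            exact this.congr_deriv (by norm_num)
          exact h1.mul ((Real.hasDerivAt_exp _).comp x h2)
        rw [hd.deriv]
        have hx' : x - 1 + Real.log 2 > 0 := by simp only [mem_Ioi, hy0] at hx; linarith
        have hexp : (0:ℝ) < Real.exp (-x - (x - 1 + Real.log 2)) := Real.exp_pos _
        nlinarith
    intro a ha b hb hab
    have hma : max (a - 1 + Real.log 2) 0 = a - 1 + Real.log 2 := by
      apply max_eq_left; simp only [mem_Ici, hy0] at ha; linarith
    have hmb : max (b - 1 + Real.log 2) 0 = b - 1 + Real.log 2 := by
      apply max_eq_left; simp only [mem_Ici, hy0] at hb; linarith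
    have := hpsi ha hb hab
    simpa [gFun, hma, hmb] using this
  intro a b hab
  rcases le_total b y0 with hb | hb
  · exact hIic (le_trans hab hb) hb hab
  · rcases le_total y0 a with ha | ha
    · exact hIci ha (le_trans ha hab) hab
    · exact le_trans (hIci (mem_Ici.2 le_rfl) (mem_Ici.2 hb) hb) (hIic (mem_Iic.2 ha) (mem_Iic.2 le_rfl) ha)

/-- Appendix B.2: concavity of Equation (8). -/
theorem concave_socs_basic_matching_bound :
    ConcaveOn ℝ (Set.Icc (0 : ℝ) 1)
      (fun y : ℝ => 1 - (1 + max (y - 1 + Real.log 2) 0)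
        * Real.exp (-y - max (y - 1 + Real.log 2) 0)) := by
  have key : ConcaveOn ℝ (Set.Icc (0:ℝ) 1) hFun := by
    apply AntitoneOn.concaveOn_of_deriv (convex_Icc 0 1)
    · exact fun x _ => (hasDerivAt_hFun x).continuousAt.continuousWithinAt
    · exact fun x _ => (hasDerivAt_hFun x).differentiableAt.differentiableWithinAt
    · intro a _ b _ hab
      rw [(hasDerivAt_hFun a).deriv, (hasDerivAt_hFun b).deriv]
      exact antitone_gFun hab
  exact key
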